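/- arXiv:2501.11181 — 5 statements merged into one kernel-verified Lean document; each statement's English description precedes it below -/
import Mathlib

section
/- Let a, b > 0 and define the densities f_1(u) = (Γ(a+b+1)/(Γ(a+1)Γ(b))) u^a (1-u)^{b-1} and f_0(u) = (Γ(a+b+1)/(Γ(a)Γ(b+1))) u^{a-1} (1-u)^b for u ∈ (0,1), where Γ is the real Gamma function. Then the Bhattacharyya coefficient φ = ∫_0^1 √(f_1(u) f_0(u)) du satisfies φ = (Γ(a + 1/2)/(√a · Γ(a))) · (Γ(b + 1/2)/(√b · Γ(b))). -/
open MeasureTheory Real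

lemma real_betaIntegral (p q : ℝ) (hp : 0 < p) (hq : 0 < q) :
    ∫ x in Set.Ioo (0:ℝ) 1, x ^ (p - 1) * (1 - x) ^ (q - 1)
      = Real.Gamma p * Real.Gamma q / Real.Gamma (p + q) := by
  have hpq : (0:ℝ) < Real.Gamma (p + q) := Real.Gamma_pos_of_pos (by linarith)
  have hc := Complex.Gamma_mul_Gamma_eq_betaIntegral
    (s := (p:ℂ)) (t := (q:ℂ)) (by simpa using hp) (by simpa using hq)
  have hbeta : Complex.betaIntegral p q
      = ((∫ x in Set.Ioo (0:ℝ) 1, x ^ (p - 1) * (1 - x) ^ (q - 1) : ℝ) : ℂ) := by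
    rw [Complex.betaIntegral, intervalIntegral.integral_of_le zero_le_one,
      ← MeasureTheory.integral_Ioc_eq_integral_Ioo (f := fun x : ℝ =>
        x ^ (p - 1) * (1 - x) ^ (q - 1))]
    calc ∫ x in Set.Ioc (0:ℝ) 1, (x:ℂ) ^ ((p:ℂ) - 1) * (1 - (x:ℂ)) ^ ((q:ℂ) - 1)
        = ∫ x in Set.Ioc (0:ℝ) 1, ((x ^ (p - 1) * (1 - x) ^ (q - 1) : ℝ) : ℂ) := by
          refine setIntegral_congr_fun measurableSet_Ioc fun x hx => ?_
          rw [Complex.ofReal_mul, Complex.ofReal_cpow hx.1.le,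
            Complex.ofReal_cpow (by linarith [hx.2] : (0:ℝ) ≤ 1 - x)]
          push_cast
          ring
      _ = _ := integral_ofReal
  rw [hbeta, ← Complex.ofReal_add, Complex.Gamma_ofReal, Complex.Gamma_ofReal,
    Complex.Gamma_ofReal] at hc
  have h2 : Real.Gamma p * Real.Gamma q
      = Real.Gamma (p + q) * ∫ x in Set.Ioo (0:ℝ) 1, x ^ (p - 1) * (1 - x) ^ (q - 1) := by
    exact_mod_cast hc
  field_simp
  linarith [h2]

/-- The Bhattacharyya coefficient between the Beta(a+1, b) density `f₁` and the
Beta(a, b+1) density `f₀` on (0,1) has the closed form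
`Γ(a + 1/2)/(√a Γ(a)) · Γ(b + 1/2)/(√b Γ(b))`. -/
theorem bhattacharyya_beta_closed_form (a b : ℝ) (ha : 0 < a) (hb : 0 < b) :
    ∫ u in Set.Ioo (0 : ℝ) 1,
        Real.sqrt
          ((Real.Gamma (a + b + 1) / (Real.Gamma (a + 1) * Real.Gamma b)
              * u ^ a * (1 - u) ^ (b - 1))
            * (Real.Gamma (a + b + 1) / (Real.Gamma a * Real.Gamma (b + 1))
              * u ^ (a - 1) * (1 - u) ^ b))
      = (Real.Gamma (a + 1 / 2) / (Real.sqrt a * Real.Gamma a))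
          * (Real.Gamma (b + 1 / 2) / (Real.sqrt b * Real.Gamma b)) := by
  have hGa : (0:ℝ) < Real.Gamma a := Real.Gamma_pos_of_pos ha
  have hGb : (0:ℝ) < Real.Gamma b := Real.Gamma_pos_of_pos hb
  have hGab : (0:ℝ) < Real.Gamma (a + b + 1) := Real.Gamma_pos_of_pos (by linarith)
  have hsa : (0:ℝ) < Real.sqrt a := Real.sqrt_pos.mpr ha
  have hsb : (0:ℝ) < Real.sqrt b := Real.sqrt_pos.mpr hb
  set K : ℝ := Real.Gamma (a + b + 1) / (Real.sqrt a * Real.sqrt b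
    * Real.Gamma a * Real.Gamma b) with hKdef
  have hK : 0 < K := by positivity
  have key : ∀ u ∈ Set.Ioo (0:ℝ) 1,
      Real.sqrt
          ((Real.Gamma (a + b + 1) / (Real.Gamma (a + 1) * Real.Gamma b)
              * u ^ a * (1 - u) ^ (b - 1))
            * (Real.Gamma (a + b + 1) / (Real.Gamma a * Real.Gamma (b + 1))
              * u ^ (a - 1) * (1 - u) ^ b))
        = K * (u ^ (a + 1/2 - 1) * (1 - u) ^ (b + 1/2 - 1)) := by
    intro u hu
    have hu0 : 0 < u := hu.1
    have hu1 : 0 < 1 - u := by linarith [hu.2]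
    have e1 : u ^ a * u ^ (a - 1) = u ^ (a + 1/2 - 1) * u ^ (a + 1/2 - 1) := by
      rw [← Real.rpow_add hu0, ← Real.rpow_add hu0]
      congr 1
      ring
    have e2 : (1 - u) ^ (b - 1) * (1 - u) ^ b
        = (1 - u) ^ (b + 1/2 - 1) * (1 - u) ^ (b + 1/2 - 1) := by
      rw [← Real.rpow_add hu1, ← Real.rpow_add hu1]
      congr 1
      ring
    have eK : Real.Gamma (a + b + 1) / (Real.Gamma (a + 1) * Real.Gamma b)
        * (Real.Gamma (a + b + 1) / (Real.Gamma a * Real.Gamma (b + 1))) = K * K := by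
      rw [hKdef, Real.Gamma_add_one ha.ne', Real.Gamma_add_one hb.ne']
      have h2a : Real.sqrt a * Real.sqrt a = a := Real.mul_self_sqrt ha.le
      have h2b : Real.sqrt b * Real.sqrt b = b := Real.mul_self_sqrt hb.le
      field_simp
      linear_combination (Real.sqrt b * Real.sqrt b) * h2a + a * h2b
    have hin : (Real.Gamma (a + b + 1) / (Real.Gamma (a + 1) * Real.Gamma b)
              * u ^ a * (1 - u) ^ (b - 1))
            * (Real.Gamma (a + b + 1) / (Real.Gamma a * Real.Gamma (b + 1))
              * u ^ (a - 1) * (1 - u) ^ b)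
        = (K * (u ^ (a + 1/2 - 1) * (1 - u) ^ (b + 1/2 - 1)))
          * (K * (u ^ (a + 1/2 - 1) * (1 - u) ^ (b + 1/2 - 1))) := by
      calc _ = (Real.Gamma (a + b + 1) / (Real.Gamma (a + 1) * Real.Gamma b)
              * (Real.Gamma (a + b + 1) / (Real.Gamma a * Real.Gamma (b + 1))))
              * (u ^ a * u ^ (a - 1)) * ((1 - u) ^ (b - 1) * (1 - u) ^ b) := by ring
        _ = _ := by rw [e1, e2, eK]; ring
    rw [hin]
    exact Real.sqrt_mul_self (by positivity)
  rw [setIntegral_congr_fun measurableSet_Ioo key, integral_const_mul,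
    real_betaIntegral (a + 1/2) (b + 1/2) (by linarith) (by linarith)]
  have hsum : a + 1/2 + (b + 1/2) = a + b + 1 := by ring
  rw [hsum, hKdef]
  field_simp
end

section
/- Fix r with 0 < r < 1 and define, for k > 0, φ(k) = (Γ(kr + 1/2)/(√(kr) · Γ(kr))) · (Γ(k(1-r) + 1/2)/(√(k(1-r)) · Γ(k(1-r)))), where Γ is the real Gamma function. Then φ is strictly monotonically increasing in k on the interval k > max{1/(2r), 1/(2(1-r))}. -/
open Real Filter Finset Nat Topology

noncomputable def cfun (t : ℝ) : ℝ := (Real.log t + Real.log (t + 1)) / 2 - Real.log (t + 1/2)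

lemma cfun_strictMono : StrictMonoOn cfun (Set.Ioi 0) := by
  have hcont : ContinuousOn cfun (Set.Ioi 0) := by
    intro x hx
    have hx0 : (0:ℝ) < x := hx
    apply ContinuousAt.continuousWithinAt
    have l1 : ContinuousAt Real.log x := Real.continuousAt_log hx0.ne'
    have l2 : ContinuousAt (fun t : ℝ => Real.log (t + 1)) x :=
      (by fun_prop : ContinuousAt (fun t : ℝ => t + 1) x).log (by positivity)
    have l3 : ContinuousAt (fun t : ℝ => Real.log (t + 1/2)) x :=
      (by fun_prop : ContinuousAt (fun t : ℝ => t + 1/2) x).log (by positivity)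
    exact ((l1.add l2).div_const 2).sub l3
  apply strictMonoOn_of_deriv_pos (convex_Ioi 0) hcont
  intro t ht
  rw [interior_Ioi] at ht
  have ht0 : (0:ℝ) < t := ht
  have ht1 : (0:ℝ) < t + 1 := by linarith
  have ht2 : (0:ℝ) < t + 1/2 := by linarith
  have h1 : HasDerivAt (fun t : ℝ => Real.log t) t⁻¹ t := Real.hasDerivAt_log ht0.ne'
  have h2 : HasDerivAt (fun t : ℝ => Real.log (t + 1)) (t + 1)⁻¹ t := by
    have := (Real.hasDerivAt_log ht1.ne').comp t ((hasDerivAt_id t).add_const 1)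
    simpa [Function.comp_def] using this
  have h3 : HasDerivAt (fun t : ℝ => Real.log (t + 1/2)) (t + 1/2)⁻¹ t := by
    have := (Real.hasDerivAt_log ht2.ne').comp t ((hasDerivAt_id t).add_const (1/2))
    simpa [Function.comp_def] using this
  have H : HasDerivAt cfun ((t⁻¹ + (t + 1)⁻¹) / 2 - (t + 1/2)⁻¹) t :=
    ((h1.add h2).div_const 2).sub h3
  rw [H.deriv, sub_pos, inv_eq_one_div, inv_eq_one_div, inv_eq_one_div,
    div_add_div _ _ ht0.ne' ht1.ne', div_div, div_lt_div_iff₀ ht2 (by positivity)]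
  nlinarith


lemma log_GammaSeq (s : ℝ) (hs : 0 < s) (n : ℕ) (hn : 1 ≤ n) :
    Real.log (Real.GammaSeq s n)
      = s * Real.log n + Real.log (n ! : ℝ) - ∑ j ∈ Finset.range (n+1), Real.log (s + j) := by
  have hn0 : (0:ℝ) < n := by exact_mod_cast hn
  have hfac : ((n ! : ℝ)) ≠ 0 := by positivity
  have hterm : ∀ j ∈ Finset.range (n+1), s + (j:ℕ) ≠ 0 := by
    intro j _; positivity
  rw [Real.GammaSeq, Real.log_div (by positivity) (Finset.prod_ne_zero_iff.2 (by intro j _; positivity)),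
    Real.log_mul (by positivity) hfac, Real.log_rpow hn0,
    Real.log_prod (by intro j _; positivity)]

lemma hseq_eq (x : ℝ) (hx : 0 < x) (n : ℕ) (hn : 1 ≤ n) :
    Real.log (Real.GammaSeq (x + 1/2) n) -
      (Real.log (Real.GammaSeq x n) + Real.log (Real.GammaSeq (x+1) n)) / 2
    = ∑ j ∈ Finset.range (n+1), cfun (x + j) := by
  rw [log_GammaSeq x hx n hn, log_GammaSeq (x + 1/2) (by linarith) n hn,
    log_GammaSeq (x + 1) (by linarith) n hn]
  have e2 : ∑ j ∈ Finset.range (n+1), Real.log (x + 1 + j)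
      = ∑ j ∈ Finset.range (n+1), Real.log ((x + j) + 1) :=
    Finset.sum_congr rfl (by intro j _; ring_nf)
  have e3 : ∑ j ∈ Finset.range (n+1), Real.log (x + 1/2 + j)
      = ∑ j ∈ Finset.range (n+1), Real.log ((x + j) + 1/2) :=
    Finset.sum_congr rfl (by intro j _; ring_nf)
  simp only [cfun]
  rw [Finset.sum_sub_distrib, ← Finset.sum_div, Finset.sum_add_distrib, ← e2, ← e3]
  ring




noncomputable def hfun (x : ℝ) : ℝ :=
  Real.log (Real.Gamma (x + 1/2)) -
    (Real.log (Real.Gamma x) + Real.log (Real.Gamma (x + 1))) / 2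

lemma tendsto_log_GammaSeq {s : ℝ} (hs : 0 < s) :
    Tendsto (fun n => Real.log (Real.GammaSeq s n)) atTop (𝓝 (Real.log (Real.Gamma s))) :=
  ((Real.continuousAt_log (Real.Gamma_pos_of_pos hs).ne').tendsto).comp
    (Real.GammaSeq_tendsto_Gamma s)

lemma hfun_lt {x y : ℝ} (hx : 0 < x) (hxy : x < y) : hfun x < hfun y := by
  have hy : 0 < y := lt_trans hx hxy
  have hc : cfun x < cfun y := cfun_strictMono hx hy hxy
  have key : cfun y - cfun x ≤ hfun y - hfun x := by
    have T : Tendsto (fun n : ℕ =>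
        (Real.log (Real.GammaSeq (y + 1/2) n) -
          (Real.log (Real.GammaSeq y n) + Real.log (Real.GammaSeq (y+1) n)) / 2) -
        (Real.log (Real.GammaSeq (x + 1/2) n) -
          (Real.log (Real.GammaSeq x n) + Real.log (Real.GammaSeq (x+1) n)) / 2))
        atTop (𝓝 (hfun y - hfun x)) := by
      apply Tendsto.sub
      · exact (tendsto_log_GammaSeq (by linarith)).sub
          (((tendsto_log_GammaSeq hy).add (tendsto_log_GammaSeq (by linarith))).div_const 2)
      · exact (tendsto_log_GammaSeq (by linarith)).sub
          (((tendsto_log_GammaSeq hx).add (tendsto_log_GammaSeq (by linarith))).div_const 2)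
    apply ge_of_tendsto T
    filter_upwards [eventually_ge_atTop 1] with n hn
    rw [hseq_eq x hx n hn, hseq_eq y hy n hn, ← Finset.sum_sub_distrib]
    have h0 : (fun j : ℕ => cfun (y + j) - cfun (x + j)) 0 = cfun y - cfun x := by simp
    rw [← h0]
    apply Finset.single_le_sum (f := fun j : ℕ => cfun (y + j) - cfun (x + j))
    · intro j _
      have : (0:ℝ) < x + j := by positivity
      have := cfun_strictMono this (by simp only [Set.mem_Ioi]; linarith : (y + (j:ℝ)) ∈ Set.Ioi (0:ℝ)) (by linarith)
      linarith
    · simp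
  linarith

lemma factor_eq {x : ℝ} (hx : 0 < x) :
    Real.Gamma (x + 1/2) / (Real.sqrt x * Real.Gamma x) = Real.exp (hfun x) := by
  have hG : 0 < Real.Gamma x := Real.Gamma_pos_of_pos hx
  have hG2 : 0 < Real.Gamma (x + 1/2) := Real.Gamma_pos_of_pos (by linarith)
  have hsqrt : Real.sqrt x = Real.exp (Real.log x / 2) := by
    rw [Real.sqrt_eq_rpow, Real.rpow_def_of_pos hx]
    ring_nf
  rw [hfun, Real.exp_sub, Real.exp_log hG2]
  congr 1
  rw [Real.Gamma_add_one hx.ne', Real.log_mul hx.ne' hG.ne',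
    show (Real.log (Real.Gamma x) + (Real.log x + Real.log (Real.Gamma x))) / 2
      = Real.log (Real.Gamma x) + Real.log x / 2 by ring,
    Real.exp_add, Real.exp_log hG, hsqrt]
  ring

/-- For fixed treatment proportion `r ∈ (0,1)`, the Beta-overlap coefficient
`φ(k) = Γ(kr + 1/2)/(√(kr) Γ(kr)) · Γ(k(1-r) + 1/2)/(√(k(1-r)) Γ(k(1-r)))`
is strictly increasing on `k > max{1/(2r), 1/(2(1-r))}`. -/
theorem overlap_coefficient_strictMonoOn (r : ℝ) (hr0 : 0 < r) (hr1 : r < 1) :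
    StrictMonoOn
      (fun k : ℝ =>
        (Real.Gamma (k * r + 1 / 2) / (Real.sqrt (k * r) * Real.Gamma (k * r)))
          * (Real.Gamma (k * (1 - r) + 1 / 2)
              / (Real.sqrt (k * (1 - r)) * Real.Gamma (k * (1 - r)))))
      (Set.Ioi (max (1 / (2 * r)) (1 / (2 * (1 - r))))) := by
  have hr1' : 0 < 1 - r := by linarith
  intro k1 hk1 k2 hk2 h12
  simp only [Set.mem_Ioi, lt_max_iff, max_lt_iff] at hk1 hk2
  have hk1pos : 0 < k1 := lt_trans (by positivity) hk1.1
  have hk2pos : 0 < k2 := lt_trans hk1pos h12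
  have h1r : 0 < k1 * r := by positivity
  have h1s : 0 < k1 * (1 - r) := by positivity
  have h2r : 0 < k2 * r := by positivity
  have h2s : 0 < k2 * (1 - r) := by positivity
  simp only
  rw [factor_eq h1r, factor_eq h1s, factor_eq h2r, factor_eq h2s,
    ← Real.exp_add, ← Real.exp_add, Real.exp_lt_exp]
  have m1 : hfun (k1 * r) < hfun (k2 * r) :=
    hfun_lt h1r (by nlinarith)
  have m2 : hfun (k1 * (1 - r)) < hfun (k2 * (1 - r)) :=
    hfun_lt h1s (by nlinarith)
  linarith
end

section
/- Let 0 < r < 1 and k > max{1/(2r), 1/(2(1-r))}. Then ∫_0^1 (r t^{kr-1} + (1-r) t^{k(1-r)-1}) / (1 + √t) dt − 1/k = (1/k) ∫_0^1 (u^{2kr} + u^{2k(1-r)}) / (1+u)^2 du, and in particular the left-hand side is strictly positive. -/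
open MeasureTheory Set

lemma sq_image_Ioo : (fun u : ℝ => u ^ 2) '' Set.Ioo 0 1 = Set.Ioo (0:ℝ) 1 := by
  ext t
  constructor
  · rintro ⟨u, ⟨hu0, hu1⟩, rfl⟩
    refine ⟨by positivity, ?_⟩
    show u ^ 2 < 1
    nlinarith
  · rintro ⟨ht0, ht1⟩
    refine ⟨Real.sqrt t, ⟨Real.sqrt_pos.2 ht0, ?_⟩, Real.sq_sqrt ht0.le⟩
    rw [show (1:ℝ) = Real.sqrt 1 by simp]
    exact Real.sqrt_lt_sqrt ht0.le ht1

lemma sq_derivWithin : ∀ x ∈ Set.Ioo (0:ℝ) 1,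
    HasDerivWithinAt (fun u : ℝ => u ^ 2) (2 * x) (Set.Ioo 0 1) x := by
  intro x _
  simpa using (hasDerivAt_pow 2 x).hasDerivWithinAt

lemma sq_injOn : Set.InjOn (fun u : ℝ => u ^ 2) (Set.Ioo 0 1) := by
  intro x hx y hy hxy
  simp only at hxy
  rcases mul_eq_zero.1 (show (x - y) * (x + y) = 0 by nlinarith) with h | h
  · linarith
  · exfalso; have := hx.1; have := hy.1; linarith

lemma g_integrable (c : ℝ) (hc : 0 < c) :
    IntegrableOn (fun u : ℝ => u ^ c / (1 + u) ^ 2) (Set.Ioo (0:ℝ) 1) := by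
  have hcont : ContinuousOn (fun u : ℝ => u ^ c / (1 + u) ^ 2) (Set.Icc 0 1) := by
    apply ContinuousOn.div
    · exact (Real.continuous_rpow_const hc.le).continuousOn
    · fun_prop
    · intro x hx
      have := hx.1
      positivity
  exact (hcont.integrableOn_compact isCompact_Icc).mono_set Set.Ioo_subset_Icc_self

/-- The key single-term identity. -/
lemma key_term (a : ℝ) (ha : 1/2 < a) :
    ((∫ t in Set.Ioo (0:ℝ) 1, a * t ^ (a-1) / (1 + Real.sqrt t))
      = 1/2 + ∫ u in Set.Ioo (0:ℝ) 1, u ^ (2*a) / (1+u)^2)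
    ∧ IntegrableOn (fun t => a * t ^ (a-1) / (1 + Real.sqrt t)) (Set.Ioo (0:ℝ) 1) := by
  have ha0 : 0 < a := by linarith
  set c : ℝ → ℝ := fun u => 2 * a * u ^ (2*a - 1) / (1 + u) with hc_def
  set g : ℝ → ℝ := fun u => u ^ (2*a) / (1+u)^2 with hg_def
  have hpt : ∀ u ∈ Set.Ioo (0:ℝ) 1,
      |2 * u| * (a * (u^2) ^ (a-1) / (1 + Real.sqrt (u^2))) = c u := by
    intro u ⟨hu0, hu1⟩
    have h1u : (0:ℝ) < 1 + u := by linarith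
    rw [abs_of_pos (by linarith), Real.sqrt_sq hu0.le]
    have h2 : ((u:ℝ)^2) ^ (a-1) = u ^ (2*(a-1)) := by
      rw [Real.rpow_mul hu0.le, Real.rpow_two]
    have h3 : u ^ (2*a - 1) = u ^ (2*(a-1)) * u := by
      rw [show 2*a - 1 = 2*(a-1) + 1 by ring, Real.rpow_add hu0, Real.rpow_one]
    simp only [hc_def]
    rw [h2, h3]
    field_simp
  have hc_cont : ContinuousOn c (Set.Icc 0 1) := by
    apply ContinuousOn.div
    · exact (continuous_const.mul (Real.continuous_rpow_const (by linarith))).continuousOn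
    · fun_prop
    · intro x hx; have := hx.1; positivity
  have hc_int : IntegrableOn c (Set.Ioo (0:ℝ) 1) :=
    (hc_cont.integrableOn_compact isCompact_Icc).mono_set Set.Ioo_subset_Icc_self
  have hg_int : IntegrableOn g (Set.Ioo (0:ℝ) 1) := g_integrable _ (by linarith)
  -- substitution
  have hsub := integral_image_eq_integral_abs_deriv_smul (f := fun u : ℝ => u ^ 2)
    (f' := fun u => 2 * u) measurableSet_Ioo sq_derivWithin sq_injOn
    (fun t => a * t ^ (a-1) / (1 + Real.sqrt t))
  rw [sq_image_Ioo] at hsub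
  simp only [smul_eq_mul] at hsub
  have hsub_int := (integrableOn_image_iff_integrableOn_abs_deriv_smul (f := fun u : ℝ => u ^ 2)
    (f' := fun u => 2 * u) measurableSet_Ioo sq_derivWithin sq_injOn
    (fun t => a * t ^ (a-1) / (1 + Real.sqrt t)))
  rw [sq_image_Ioo] at hsub_int
  simp only [smul_eq_mul] at hsub_int
  have hint_orig : IntegrableOn (fun t => a * t ^ (a-1) / (1 + Real.sqrt t)) (Set.Ioo (0:ℝ) 1) := by
    rw [hsub_int]
    exact hc_int.congr_fun (fun u hu => (hpt u hu).symm) measurableSet_Ioo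
  refine ⟨?_, hint_orig⟩
  rw [hsub, setIntegral_congr_fun measurableSet_Ioo hpt]
  -- now show ∫ c = 1/2 + ∫ g via FTC
  have hF_deriv : ∀ u ∈ Set.Ioo (0:ℝ) 1,
      HasDerivAt (fun u : ℝ => u ^ (2*a) / (1+u)) (c u - g u) u := by
    intro u ⟨hu0, hu1⟩
    have h1u : (0:ℝ) < 1 + u := by linarith
    have hp : HasDerivAt (fun x : ℝ => x ^ (2*a)) (2*a * u ^ (2*a - 1)) u :=
      Real.hasDerivAt_rpow_const (Or.inl hu0.ne')
    have hq : HasDerivAt (fun x : ℝ => 1 + x) 1 u := by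
      simpa using (hasDerivAt_id u).const_add 1
    have := hp.div hq h1u.ne'
    refine this.congr_deriv ?_
    rw [hc_def, hg_def]
    field_simp
  have hF_cont : ContinuousOn (fun u : ℝ => u ^ (2*a) / (1+u)) (Set.Icc 0 1) := by
    apply ContinuousOn.div
    · exact (Real.continuous_rpow_const (by linarith)).continuousOn
    · fun_prop
    · intro x hx; have := hx.1; positivity
  have hcg_int : IntervalIntegrable (fun u => c u - g u) volume 0 1 := by
    rw [intervalIntegrable_iff_integrableOn_Ioc_of_le (by norm_num)]
    rw [IntegrableOn, Measure.restrict_congr_set Ioo_ae_eq_Ioc.symm]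
    exact hc_int.sub hg_int
  have hFTC := intervalIntegral.integral_eq_sub_of_hasDerivAt_of_le (by norm_num : (0:ℝ) ≤ 1)
    hF_cont hF_deriv hcg_int
  rw [intervalIntegral.integral_of_le (by norm_num : (0:ℝ) ≤ 1),
    integral_Ioc_eq_integral_Ioo] at hFTC
  rw [integral_sub hc_int hg_int] at hFTC
  have hF1 : (1:ℝ) ^ (2*a) / (1+1) = 1/2 := by rw [Real.one_rpow]; norm_num
  have hF0 : (0:ℝ) ^ (2*a) / (1+0) = 0 := by
    rw [Real.zero_rpow (by positivity)]; norm_num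
  rw [hF1, hF0] at hFTC
  linarith

/-- The key integral identity (via the substitution `t = u²` and integration by parts) showing
that the derivative of the log Beta-overlap coefficient is positive:
`∫₀¹ (r t^{kr-1} + (1-r) t^{k(1-r)-1})/(1 + √t) dt − 1/k
  = (1/k) ∫₀¹ (u^{2kr} + u^{2k(1-r)})/(1+u)² du > 0`. -/
theorem overlap_derivative_integral_identity
    (r k : ℝ) (hr0 : 0 < r) (hr1 : r < 1)
    (hk : max (1 / (2 * r)) (1 / (2 * (1 - r))) < k) :
    ((∫ t in Set.Ioo (0 : ℝ) 1,
        (r * t ^ (k * r - 1) + (1 - r) * t ^ (k * (1 - r) - 1)) / (1 + Real.sqrt t)) - 1 / k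
      = (1 / k) * ∫ u in Set.Ioo (0 : ℝ) 1,
          (u ^ (2 * k * r) + u ^ (2 * k * (1 - r))) / (1 + u) ^ 2)
    ∧ 0 < (∫ t in Set.Ioo (0 : ℝ) 1,
        (r * t ^ (k * r - 1) + (1 - r) * t ^ (k * (1 - r) - 1)) / (1 + Real.sqrt t)) - 1 / k := by
  have hr1' : 0 < 1 - r := by linarith
  have hk0 : 0 < k := lt_trans (by positivity) ((le_max_left (1 / (2 * r)) _).trans_lt hk)
  have ha : 1/2 < k * r := by
    have h1 : 1 / (2 * r) < k := (le_max_left _ _).trans_lt hk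
    have := (div_lt_iff₀ (by positivity : (0:ℝ) < 2 * r)).1 h1
    nlinarith
  have hb : 1/2 < k * (1 - r) := by
    have h1 : 1 / (2 * (1 - r)) < k := (le_max_right _ _).trans_lt hk
    have := (div_lt_iff₀ (by positivity : (0:ℝ) < 2 * (1 - r))).1 h1
    nlinarith
  obtain ⟨hAeq, hAint⟩ := key_term (k * r) ha
  obtain ⟨hBeq, hBint⟩ := key_term (k * (1 - r)) hb
  have hga := g_integrable (2 * (k * r)) (by linarith)
  have hgb := g_integrable (2 * (k * (1 - r))) (by linarith)
  have hsplit : ∀ t ∈ Set.Ioo (0:ℝ) 1,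
      (r * t ^ (k * r - 1) + (1 - r) * t ^ (k * (1 - r) - 1)) / (1 + Real.sqrt t)
      = (1/k) * (k * r * t ^ (k * r - 1) / (1 + Real.sqrt t))
        + (1/k) * (k * (1 - r) * t ^ (k * (1 - r) - 1) / (1 + Real.sqrt t)) := by
    intro t ⟨ht0, ht1⟩
    have hs : (0:ℝ) < 1 + Real.sqrt t := by
      have := Real.sqrt_nonneg t; linarith
    field_simp
  have hLHS : (∫ t in Set.Ioo (0 : ℝ) 1,
        (r * t ^ (k * r - 1) + (1 - r) * t ^ (k * (1 - r) - 1)) / (1 + Real.sqrt t))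
      = (1/k) * (1/2 + ∫ u in Set.Ioo (0:ℝ) 1, u ^ (2*(k*r)) / (1+u)^2)
        + (1/k) * (1/2 + ∫ u in Set.Ioo (0:ℝ) 1, u ^ (2*(k*(1-r))) / (1+u)^2) := by
    rw [setIntegral_congr_fun measurableSet_Ioo hsplit,
      integral_add (hAint.const_mul _) (hBint.const_mul _),
      integral_const_mul, integral_const_mul, hAeq, hBeq]
  have hRHS : (∫ u in Set.Ioo (0 : ℝ) 1,
        (u ^ (2 * k * r) + u ^ (2 * k * (1 - r))) / (1 + u) ^ 2)
      = (∫ u in Set.Ioo (0:ℝ) 1, u ^ (2*(k*r)) / (1+u)^2)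
        + (∫ u in Set.Ioo (0:ℝ) 1, u ^ (2*(k*(1-r))) / (1+u)^2) := by
    rw [← integral_add hga hgb]
    apply setIntegral_congr_fun measurableSet_Ioo
    intro u _
    rw [show 2*k*r = 2*(k*r) by ring, show 2*k*(1-r) = 2*(k*(1-r)) by ring]
    ring
  have heq : (∫ t in Set.Ioo (0 : ℝ) 1,
        (r * t ^ (k * r - 1) + (1 - r) * t ^ (k * (1 - r) - 1)) / (1 + Real.sqrt t)) - 1 / k
      = (1 / k) * ∫ u in Set.Ioo (0 : ℝ) 1,
          (u ^ (2 * k * r) + u ^ (2 * k * (1 - r))) / (1 + u) ^ 2 := by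
    rw [hLHS, hRHS]
    field_simp
    ring
  refine ⟨heq, ?_⟩
  rw [heq]
  have hpos : 0 < ∫ u in Set.Ioo (0 : ℝ) 1,
      (u ^ (2 * k * r) + u ^ (2 * k * (1 - r))) / (1 + u) ^ 2 := by
    have hint : IntegrableOn
        (fun u : ℝ => (u ^ (2 * k * r) + u ^ (2 * k * (1 - r))) / (1 + u) ^ 2)
        (Set.Ioo (0:ℝ) 1) := by
      refine IntegrableOn.congr_fun (hga.add hgb) ?_ measurableSet_Ioo
      intro u _
      simp only [Pi.add_apply]
      rw [show 2*k*r = 2*(k*r) by ring, show 2*k*(1-r) = 2*(k*(1-r)) by ring]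
      ring
    rw [setIntegral_pos_iff_support_of_nonneg_ae _ hint]
    · refine lt_of_lt_of_le (b := volume (Set.Ioo (0:ℝ) 1)) ?_ (measure_mono ?_)
      · rw [Real.volume_Ioo]; norm_num
      · intro u hu
        refine ⟨?_, hu⟩
        have hu0 := hu.1
        have h1 : (0:ℝ) < u ^ (2 * k * r) := Real.rpow_pos_of_pos hu0 _
        have h2 : (0:ℝ) < u ^ (2 * k * (1 - r)) := Real.rpow_pos_of_pos hu0 _
        have h3 : (0:ℝ) < (1 + u) ^ 2 := by nlinarith [hu.1]
        simp only [Function.mem_support]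
        positivity
    · filter_upwards [ae_restrict_mem measurableSet_Ioo] with u hu
      simp only [Pi.zero_apply]
      have h1 : (0:ℝ) < u ^ (2 * k * r) := Real.rpow_pos_of_pos hu.1 _
      have h2 : (0:ℝ) < u ^ (2 * k * (1 - r)) := Real.rpow_pos_of_pos hu.1 _
      have h3 : (0:ℝ) < (1 + u) ^ 2 := by nlinarith [hu.1]
      positivity
  positivity
end

section
/- Let W and ε be independent real random variables with W ~ N(μ_e, σ_e^2) and ε ~ N(0, σ_1^2), where σ_e > 0 and σ_1 ≥ 0, and let a ∈ ℝ. Then E[(a(W − μ_e) + ε)^2 · (1 + e^{−W})] = a^2 σ_e^2 + σ_1^2 + (a^2 σ_e^2 (σ_e^2 + 1) + σ_1^2) · exp(−μ_e + σ_e^2/2). -/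
open MeasureTheory ProbabilityTheory Real

-- volume-level atoms
lemma vol_int1 (b : ℝ) : ∫ x : ℝ, x * Real.exp (-b * x ^ 2) = 0 := by
  have h := integral_neg_eq_self (fun x : ℝ => x * Real.exp (-b * x ^ 2)) (volume : Measure ℝ)
  simp only [neg_sq, neg_mul] at h ⊢
  rw [integral_neg] at h
  linarith

lemma vol_int2 {b : ℝ} (hb : 0 < b) :
    ∫ x : ℝ, x ^ 2 * Real.exp (-b * x ^ 2) = Real.sqrt (π / b) / (2 * b) := by
  have h := integral_comp_abs (f := fun x : ℝ => x ^ 2 * Real.exp (-b * x ^ 2))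
  simp only [sq_abs] at h
  have h2 : ∫ x in Set.Ioi (0:ℝ), x ^ 2 * Real.exp (-b * x ^ 2)
      = b ^ (-(2+1) / 2 : ℝ) * (1 / 2) * Real.Gamma ((2 + 1) / 2) := by
    have := integral_rpow_mul_exp_neg_mul_rpow (p := 2) (q := 2) two_pos (by norm_num) hb
    simp only [show ((2:ℝ)) = ((2:ℕ):ℝ) by norm_num, Real.rpow_natCast] at this
    norm_num at this ⊢
    convert this using 2
  have hG : Real.Gamma ((2 + 1) / 2 : ℝ) = Real.sqrt π / 2 := by
    have : ((2 + 1) / 2 : ℝ) = 1/2 + 1 := by norm_num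
    rw [this, Real.Gamma_add_one (by norm_num), Real.Gamma_one_half_eq]
    ring
  rw [h, h2, hG]
  have hb' : b ^ (-(2+1) / 2 : ℝ) = (Real.sqrt b)⁻¹ * b⁻¹ := by
    rw [show (-(2+1) / 2 : ℝ) = (-(1/2)) + (-1) by norm_num, Real.rpow_add hb,
      Real.rpow_neg_one, Real.rpow_neg hb.le, Real.sqrt_eq_rpow]
  rw [hb', Real.sqrt_div pi_pos.le]
  have h1 : Real.sqrt b ≠ 0 := by positivity
  have h2 : b ≠ 0 := hb.ne'
  field_simp
lemma exp_shift {v : ℝ} (hv : 0 < v) (m t x : ℝ) :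
    Real.exp (t * x) * Real.exp (-(x - m) ^ 2 / (2 * v))
      = Real.exp (t * m + v * t ^ 2 / 2) * Real.exp (-(1 / (2 * v)) * (x - (m + t * v)) ^ 2) := by
  rw [← Real.exp_add, ← Real.exp_add]
  congr 1
  field_simp
  ring

-- reduction of gaussianReal integrals to shifted volume integrals
lemma gauss_reduce {v : ℝ} (hv : 0 < v) (m t : ℝ) (g : ℝ → ℝ) :
    ∫ x, g x * Real.exp (t * x) ∂(gaussianReal m ⟨v, hv.le⟩)
      = Real.exp (t * m + v * t ^ 2 / 2)
        * ∫ y, g (y + (m + t * v)) * ((Real.sqrt (2 * π * v))⁻¹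
            * Real.exp (-(1 / (2 * v)) * y ^ 2)) := by
  have hvne : (⟨v, hv.le⟩ : NNReal) ≠ 0 := by
    simp [← NNReal.coe_ne_zero, hv.ne']
  rw [gaussianReal_of_var_ne_zero _ hvne]
  have hd : (gaussianPDF m ⟨v, hv.le⟩) = fun x =>
      ((Real.toNNReal (gaussianPDFReal m ⟨v, hv.le⟩ x) : NNReal) : ENNReal) := by
    funext x; rfl
  rw [hd, integral_withDensity_eq_integral_smul
    ((measurable_gaussianPDFReal m ⟨v, hv.le⟩).real_toNNReal) _]
  have hpt : ∀ x : ℝ, (Real.toNNReal (gaussianPDFReal m ⟨v, hv.le⟩ x) : NNReal)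
        • (g x * Real.exp (t * x))
      = Real.exp (t * m + v * t ^ 2 / 2) * (g x * ((Real.sqrt (2 * π * v))⁻¹
          * Real.exp (-(1 / (2 * v)) * (x - (m + t * v)) ^ 2))) := by
    intro x
    erw [NNReal.smul_def, Real.coe_toNNReal _ (gaussianPDFReal_nonneg _ _ _)]
    show gaussianPDFReal m ⟨v, hv.le⟩ x * (g x * Real.exp (t * x)) = _
    erw [gaussianPDFReal]
    push_cast
    erw [NNReal.coe_mk]
    have h := exp_shift hv m t x
    linear_combination (g x * (Real.sqrt (2 * π * v))⁻¹) * h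
  simp_rw [hpt]
  rw [integral_const_mul]
  congr 1
  have := integral_add_right_eq_self (μ := (volume : Measure ℝ))
    (fun y => g (y + (m + t * v)) * ((Real.sqrt (2 * π * v))⁻¹
      * Real.exp (-(1 / (2 * v)) * y ^ 2))) (-(m + t * v))
  rw [← this]
  congr 1
  funext x
  simp only [neg_add_rev, add_assoc]
  ring_nf
lemma vol_int2' {b : ℝ} (hb : 0 < b) :
    Integrable (fun y : ℝ => y ^ 2 * Real.exp (-b * y ^ 2)) := by
  have := integrable_rpow_mul_exp_neg_mul_sq hb (s := 2) (by norm_num)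
  simpa only [show ((2:ℝ)) = ((2:ℕ):ℝ) by norm_num, Real.rpow_natCast] using this

lemma vol_poly_int {b : ℝ} (hb : 0 < b) (s : ℝ) (k : ℕ) (hk : k ≤ 2) :
    Integrable (fun y : ℝ => (y + s) ^ k * Real.exp (-b * y ^ 2)) := by
  have h0 := integrable_exp_neg_mul_sq hb
  have h1 := integrable_mul_exp_neg_mul_sq hb
  have h2 := vol_int2' hb
  interval_cases k
  · simpa using h0
  · have : (fun y : ℝ => (y + s) ^ 1 * Real.exp (-b * y ^ 2))
        = fun y : ℝ => y * Real.exp (-b * y ^ 2) + s * Real.exp (-b * y ^ 2) := by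
      funext y; ring
    rw [this]
    exact h1.add (h0.const_mul s)
  · have : (fun y : ℝ => (y + s) ^ 2 * Real.exp (-b * y ^ 2))
        = fun y : ℝ => (y ^ 2 * Real.exp (-b * y ^ 2)
            + (2 * s) * (y * Real.exp (-b * y ^ 2))) + s ^ 2 * Real.exp (-b * y ^ 2) := by
      funext y; ring
    rw [this]
    exact (h2.add (h1.const_mul _)).add (h0.const_mul _)

lemma vol_poly_val {b : ℝ} (hb : 0 < b) (s : ℝ) :
    (∫ y : ℝ, (y + s) ^ 0 * Real.exp (-b * y ^ 2) = Real.sqrt (π / b))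
    ∧ (∫ y : ℝ, (y + s) ^ 1 * Real.exp (-b * y ^ 2) = s * Real.sqrt (π / b))
    ∧ (∫ y : ℝ, (y + s) ^ 2 * Real.exp (-b * y ^ 2)
        = Real.sqrt (π / b) / (2 * b) + s ^ 2 * Real.sqrt (π / b)) := by
  have h0 := integrable_exp_neg_mul_sq hb
  have h1 := integrable_mul_exp_neg_mul_sq hb
  have h2 := vol_int2' hb
  have v0 := integral_gaussian b
  have v1 := vol_int1 b
  have v2 := vol_int2 hb
  refine ⟨by simpa using v0, ?_, ?_⟩
  · have : (fun y : ℝ => (y + s) ^ 1 * Real.exp (-b * y ^ 2))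
        = fun y : ℝ => y * Real.exp (-b * y ^ 2) + s * Real.exp (-b * y ^ 2) := by
      funext y; ring
    have hA : Integrable (fun y : ℝ => y * Real.exp (-b * y ^ 2)) := h1
    have hB : Integrable (fun y : ℝ => s * Real.exp (-b * y ^ 2)) := h0.const_mul s
    rw [this, integral_add hA hB, v1, integral_const_mul, v0]
    ring
  · have : (fun y : ℝ => (y + s) ^ 2 * Real.exp (-b * y ^ 2))
        = fun y : ℝ => (y ^ 2 * Real.exp (-b * y ^ 2)
            + (2 * s) * (y * Real.exp (-b * y ^ 2))) + s ^ 2 * Real.exp (-b * y ^ 2) := by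
      funext y; ring
    have hA : Integrable (fun y : ℝ => y ^ 2 * Real.exp (-b * y ^ 2)
        + (2 * s) * (y * Real.exp (-b * y ^ 2))) := h2.add (h1.const_mul _)
    have hB : Integrable (fun y : ℝ => s ^ 2 * Real.exp (-b * y ^ 2)) := h0.const_mul _
    have hC : Integrable (fun y : ℝ => (2 * s) * (y * Real.exp (-b * y ^ 2))) := h1.const_mul _
    rw [this, integral_add hA hB, integral_add h2 hC, integral_const_mul, integral_const_mul,
      v1, v0, v2]
    ring
lemma gauss_integrable_of {v : ℝ} (hv : 0 < v) (m t : ℝ) (g : ℝ → ℝ)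
    (hg : Integrable (fun y : ℝ => g (y + (m + t * v))
      * Real.exp (-(1 / (2 * v)) * y ^ 2))) :
    Integrable (fun x => g x * Real.exp (t * x)) (gaussianReal m ⟨v, hv.le⟩) := by
  have hvne : (⟨v, hv.le⟩ : NNReal) ≠ 0 := by
    simp [← NNReal.coe_ne_zero, hv.ne']
  erw [gaussianReal_of_var_ne_zero _ hvne,
    integrable_withDensity_iff (measurable_gaussianPDF _ _)
      (Filter.Eventually.of_forall fun x => ENNReal.ofReal_lt_top)]
  have hshift : Integrable (fun x : ℝ =>
      g x * Real.exp (-(1 / (2 * v)) * (x - (m + t * v)) ^ 2)) := by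
    have h2 := hg.comp_add_right (-(m + t * v))
    refine h2.congr (Filter.Eventually.of_forall fun x => ?_)
    simp only [show x + -(m + t * v) + (m + t * v) = x from by ring,
      show x + -(m + t * v) = x - (m + t * v) from by ring,
      show x - (m + t * v) + (m + t * v) = x from by ring]
  refine ((hshift.const_mul (Real.exp (t * m + v * t ^ 2 / 2)
      * (Real.sqrt (2 * π * v))⁻¹)).congr (Filter.Eventually.of_forall fun x => ?_))
  have h := exp_shift hv m t x
  simp only []
  show Real.exp (t * m + v * t ^ 2 / 2) * (Real.sqrt (2 * π * v))⁻¹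
      * (g x * Real.exp (-(1 / (2 * v)) * (x - (m + t * v)) ^ 2))
    = g x * Real.exp (t * x) * (gaussianPDF m ⟨v, hv.le⟩ x).toReal
  erw [gaussianPDF, ENNReal.toReal_ofReal (gaussianPDFReal_nonneg _ _ _), gaussianPDFReal]
  push_cast
  erw [NNReal.coe_mk]
  linear_combination (-(g x) * (Real.sqrt (2 * π * v))⁻¹) * h

lemma gauss_int_k {v : ℝ} (hv : 0 < v) (m t : ℝ) (k : ℕ) (hk : k ≤ 2) :
    Integrable (fun x => (x - m) ^ k * Real.exp (t * x)) (gaussianReal m ⟨v, hv.le⟩) := by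
  apply gauss_integrable_of hv m t
  have hb : 0 < 1 / (2 * v) := by positivity
  refine (vol_poly_int hb (t * v) k hk).congr (Filter.Eventually.of_forall fun y => ?_)
  simp only [show y + (m + t * v) - m = y + t * v from by ring]

lemma gauss_val_k {v : ℝ} (hv : 0 < v) (m t : ℝ) :
    (∫ x, Real.exp (t * x) ∂(gaussianReal m ⟨v, hv.le⟩)
        = Real.exp (t * m + v * t ^ 2 / 2))
    ∧ (∫ x, (x - m) * Real.exp (t * x) ∂(gaussianReal m ⟨v, hv.le⟩)
        = t * v * Real.exp (t * m + v * t ^ 2 / 2))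
    ∧ (∫ x, (x - m) ^ 2 * Real.exp (t * x) ∂(gaussianReal m ⟨v, hv.le⟩)
        = (v + t ^ 2 * v ^ 2) * Real.exp (t * m + v * t ^ 2 / 2)) := by
  have hb : 0 < 1 / (2 * v) := by positivity
  have hval := vol_poly_val hb (t * v)
  have hcb : (Real.sqrt (2 * π * v))⁻¹ * Real.sqrt (π / (1 / (2 * v))) = 1 := by
    rw [show π / (1 / (2 * v)) = 2 * π * v by field_simp]
    exact inv_mul_cancel₀ (by positivity)
  have key : ∀ k : ℕ, ∫ x, (x - m) ^ k * Real.exp (t * x) ∂(gaussianReal m ⟨v, hv.le⟩)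
      = Real.exp (t * m + v * t ^ 2 / 2) * ((Real.sqrt (2 * π * v))⁻¹
          * ∫ y : ℝ, (y + t * v) ^ k * Real.exp (-(1 / (2 * v)) * y ^ 2)) := by
    intro k
    rw [gauss_reduce hv m t (fun x => (x - m) ^ k)]
    congr 1
    rw [← integral_const_mul]
    congr 1
    funext y
    simp only [show y + (m + t * v) - m = y + t * v from by ring]
    ring
  refine ⟨?_, ?_, ?_⟩
  · have h0 := key 0
    simp only [pow_zero, one_mul] at h0
    rw [h0]
    have := hval.1
    simp only [pow_zero, one_mul] at this
    rw [this, hcb, mul_one]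
  · have h1 := key 1
    simp only [pow_one] at h1
    rw [h1]
    have := hval.2.1
    simp only [pow_one] at this
    rw [this]
    rw [show (Real.sqrt (2 * π * v))⁻¹ * (t * v * Real.sqrt (π / (1 / (2 * v))))
        = t * v * ((Real.sqrt (2 * π * v))⁻¹ * Real.sqrt (π / (1 / (2 * v)))) by ring, hcb]
    ring
  · rw [key 2, hval.2.2]
    have h2b : Real.sqrt (π / (1 / (2 * v))) / (2 * (1 / (2 * v)))
        = v * Real.sqrt (π / (1 / (2 * v))) := by
      field_simp
    rw [h2b, show (Real.sqrt (2 * π * v))⁻¹ * (v * Real.sqrt (π / (1 / (2 * v)))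
          + (t * v) ^ 2 * Real.sqrt (π / (1 / (2 * v))))
        = (v + (t * v) ^ 2) * ((Real.sqrt (2 * π * v))⁻¹ * Real.sqrt (π / (1 / (2 * v)))) by ring,
      hcb]
    ring
-- epsilon-law moment facts, covering variance zero
lemma eps_int1 {σ₁ : ℝ} (hσ₁ : 0 ≤ σ₁) :
    Integrable (fun x : ℝ => x) (gaussianReal 0 ⟨σ₁ ^ 2, sq_nonneg σ₁⟩) := by
  rcases eq_or_lt_of_le hσ₁ with h | h
  · have hz : (⟨σ₁ ^ 2, sq_nonneg σ₁⟩ : NNReal) = 0 := by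
      simp [← NNReal.coe_inj, ← h]
    erw [hz, gaussianReal_zero_var]
    refine (integrable_congr (ae_eq_dirac _)).mpr ?_
    exact integrable_const _
  · have hv : (0:ℝ) < σ₁ ^ 2 := by positivity
    have := gauss_int_k hv 0 0 1 (by norm_num)
    simpa using this

lemma eps_int2 {σ₁ : ℝ} (hσ₁ : 0 ≤ σ₁) :
    Integrable (fun x : ℝ => x ^ 2) (gaussianReal 0 ⟨σ₁ ^ 2, sq_nonneg σ₁⟩) := by
  rcases eq_or_lt_of_le hσ₁ with h | h
  · have hz : (⟨σ₁ ^ 2, sq_nonneg σ₁⟩ : NNReal) = 0 := by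
      simp [← NNReal.coe_inj, ← h]
    erw [hz, gaussianReal_zero_var]
    refine (integrable_congr (ae_eq_dirac _)).mpr ?_
    exact integrable_const _
  · have hv : (0:ℝ) < σ₁ ^ 2 := by positivity
    have := gauss_int_k hv 0 0 2 (by norm_num)
    simpa using this

lemma eps_val1 {σ₁ : ℝ} (hσ₁ : 0 ≤ σ₁) :
    ∫ x, x ∂(gaussianReal 0 ⟨σ₁ ^ 2, sq_nonneg σ₁⟩) = 0 := by
  rcases eq_or_lt_of_le hσ₁ with h | h
  · have hz : (⟨σ₁ ^ 2, sq_nonneg σ₁⟩ : NNReal) = 0 := by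
      simp [← NNReal.coe_inj, ← h]
    erw [hz, gaussianReal_zero_var, integral_dirac]
  · have hv : (0:ℝ) < σ₁ ^ 2 := by positivity
    have := (gauss_val_k hv 0 0).2.1
    simpa using this

lemma eps_val2 {σ₁ : ℝ} (hσ₁ : 0 ≤ σ₁) :
    ∫ x, x ^ 2 ∂(gaussianReal 0 ⟨σ₁ ^ 2, sq_nonneg σ₁⟩) = σ₁ ^ 2 := by
  rcases eq_or_lt_of_le hσ₁ with h | h
  · have hz : (⟨σ₁ ^ 2, sq_nonneg σ₁⟩ : NNReal) = 0 := by
      simp [← NNReal.coe_inj, ← h]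
    erw [hz, gaussianReal_zero_var, integral_dirac]
    simp [← h]
  · have hv : (0:ℝ) < σ₁ ^ 2 := by positivity
    have := (gauss_val_k hv 0 0).2.2
    simpa using this
/-- Treated-arm variance term: for independent `W ~ N(μₑ, σₑ²)` and `ε ~ N(0, σ₁²)`,
`E[(a(W − μₑ) + ε)² (1 + e^{−W})]
  = a²σₑ² + σ₁² + (a²σₑ²(σₑ² + 1) + σ₁²) exp(−μₑ + σₑ²/2)`. -/
theorem treated_arm_variance_term
    {Ω : Type*} [MeasurableSpace Ω] (P : Measure Ω) [IsProbabilityMeasure P]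
    (W ε : Ω → ℝ) (hW : Measurable W) (hε : Measurable ε)
    (hindep : IndepFun W ε P)
    (μₑ σₑ σ₁ a : ℝ) (hσₑ : 0 < σₑ) (hσ₁ : 0 ≤ σ₁)
    (hWlaw : Measure.map W P = gaussianReal μₑ ⟨σₑ ^ 2, sq_nonneg σₑ⟩)
    (hεlaw : Measure.map ε P = gaussianReal 0 ⟨σ₁ ^ 2, sq_nonneg σ₁⟩) :
    ∫ ω, (a * (W ω - μₑ) + ε ω) ^ 2 * (1 + Real.exp (-(W ω))) ∂P
      = a ^ 2 * σₑ ^ 2 + σ₁ ^ 2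
        + (a ^ 2 * σₑ ^ 2 * (σₑ ^ 2 + 1) + σ₁ ^ 2) * Real.exp (-μₑ + σₑ ^ 2 / 2) := by
  have hv : (0:ℝ) < σₑ ^ 2 := by positivity
  haveI := instIsProbabilityMeasureGaussianReal μₑ ⟨σₑ ^ 2, sq_nonneg σₑ⟩
  set f1 : ℝ → ℝ := fun x => (x - μₑ) ^ 2 * (1 + Real.exp (-x)) with hf1
  set f2 : ℝ → ℝ := fun x => (x - μₑ) * (1 + Real.exp (-x)) with hf2
  set f3 : ℝ → ℝ := fun x => 1 + Real.exp (-x) with hf3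
  have mf1 : Measurable f1 := by rw [hf1]; fun_prop
  have mf2 : Measurable f2 := by rw [hf2]; fun_prop
  have mf3 : Measurable f3 := by rw [hf3]; fun_prop
  have harg : (-1 : ℝ) * μₑ + σₑ ^ 2 * (-1) ^ 2 / 2 = -μₑ + σₑ ^ 2 / 2 := by ring
  -- gaussian-side integrability
  have A0 : Integrable (fun x : ℝ => (x - μₑ) ^ 2) (gaussianReal μₑ ⟨σₑ ^ 2, sq_nonneg σₑ⟩) := by
    simpa using gauss_int_k hv μₑ 0 2 (by norm_num)
  have B0 : Integrable (fun x : ℝ => (x - μₑ) ^ 2 * Real.exp (-x))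
      (gaussianReal μₑ ⟨σₑ ^ 2, sq_nonneg σₑ⟩) := by
    simpa [neg_one_mul] using gauss_int_k hv μₑ (-1) 2 (by norm_num)
  have A1 : Integrable (fun x : ℝ => (x - μₑ)) (gaussianReal μₑ ⟨σₑ ^ 2, sq_nonneg σₑ⟩) := by
    simpa using gauss_int_k hv μₑ 0 1 (by norm_num)
  have B1 : Integrable (fun x : ℝ => (x - μₑ) * Real.exp (-x))
      (gaussianReal μₑ ⟨σₑ ^ 2, sq_nonneg σₑ⟩) := by
    simpa [neg_one_mul] using gauss_int_k hv μₑ (-1) 1 (by norm_num)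
  have B2 : Integrable (fun x : ℝ => Real.exp (-x)) (gaussianReal μₑ ⟨σₑ ^ 2, sq_nonneg σₑ⟩) := by
    simpa [neg_one_mul] using gauss_int_k hv μₑ (-1) 0 (by norm_num)
  have hNint1 : Integrable f1 (gaussianReal μₑ ⟨σₑ ^ 2, sq_nonneg σₑ⟩) :=
    (A0.add B0).congr (Filter.Eventually.of_forall fun x => by
      simp only [Pi.add_apply, hf1]; ring)
  have hNint2 : Integrable f2 (gaussianReal μₑ ⟨σₑ ^ 2, sq_nonneg σₑ⟩) :=
    (A1.add B1).congr (Filter.Eventually.of_forall fun x => by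
      simp only [Pi.add_apply, hf2]; ring)
  have hNint3 : Integrable f3 (gaussianReal μₑ ⟨σₑ ^ 2, sq_nonneg σₑ⟩) :=
    ((integrable_const (1:ℝ)).add B2).congr (Filter.Eventually.of_forall fun x => by
      simp only [Pi.add_apply, hf3])
  -- gaussian-side values
  have hVA0 : ∫ x, (x - μₑ) ^ 2 ∂(gaussianReal μₑ ⟨σₑ ^ 2, sq_nonneg σₑ⟩) = σₑ ^ 2 := by
    simpa using (gauss_val_k hv μₑ 0).2.2
  have hVB0 : ∫ x, (x - μₑ) ^ 2 * Real.exp (-x) ∂(gaussianReal μₑ ⟨σₑ ^ 2, sq_nonneg σₑ⟩)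
      = (σₑ ^ 2 + σₑ ^ 2 * σₑ ^ 2) * Real.exp (-μₑ + σₑ ^ 2 / 2) := by
    have h := (gauss_val_k hv μₑ (-1)).2.2
    rw [harg] at h
    simp only [neg_one_mul] at h
    rw [h]; ring
  have hVB2 : ∫ x, Real.exp (-x) ∂(gaussianReal μₑ ⟨σₑ ^ 2, sq_nonneg σₑ⟩)
      = Real.exp (-μₑ + σₑ ^ 2 / 2) := by
    have h := (gauss_val_k hv μₑ (-1)).1
    rw [harg] at h
    simpa [neg_one_mul] using h
  have hVf1 : ∫ x, f1 x ∂(gaussianReal μₑ ⟨σₑ ^ 2, sq_nonneg σₑ⟩)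
      = σₑ ^ 2 + (σₑ ^ 2 + σₑ ^ 2 * σₑ ^ 2) * Real.exp (-μₑ + σₑ ^ 2 / 2) := by
    have hsplit : ∫ x, f1 x ∂(gaussianReal μₑ ⟨σₑ ^ 2, sq_nonneg σₑ⟩)
        = (∫ x, (x - μₑ) ^ 2 ∂(gaussianReal μₑ ⟨σₑ ^ 2, sq_nonneg σₑ⟩))
          + ∫ x, (x - μₑ) ^ 2 * Real.exp (-x) ∂(gaussianReal μₑ ⟨σₑ ^ 2, sq_nonneg σₑ⟩) := by
      rw [← integral_add A0 B0]
      refine integral_congr_ae (Filter.Eventually.of_forall fun x => ?_)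
      simp only [Pi.add_apply, hf1]; ring
    rw [hsplit, hVA0, hVB0]
  have hVf3 : ∫ x, f3 x ∂(gaussianReal μₑ ⟨σₑ ^ 2, sq_nonneg σₑ⟩)
      = 1 + Real.exp (-μₑ + σₑ ^ 2 / 2) := by
    have hsplit : ∫ x, f3 x ∂(gaussianReal μₑ ⟨σₑ ^ 2, sq_nonneg σₑ⟩)
        = (∫ _, (1:ℝ) ∂(gaussianReal μₑ ⟨σₑ ^ 2, sq_nonneg σₑ⟩))
          + ∫ x, Real.exp (-x) ∂(gaussianReal μₑ ⟨σₑ ^ 2, sq_nonneg σₑ⟩) := by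
      rw [← integral_add (integrable_const (1:ℝ)) B2]
    rw [hsplit, hVB2, integral_const]
    simp
  -- transfer to P
  have intW : ∀ f : ℝ → ℝ, Measurable f
      → Integrable f (gaussianReal μₑ ⟨σₑ ^ 2, sq_nonneg σₑ⟩)
      → Integrable (fun ω => f (W ω)) P := by
    intro f hfm h
    rw [← hWlaw] at h
    exact (integrable_map_measure hfm.aestronglyMeasurable hW.aemeasurable).mp h
  have valW : ∀ f : ℝ → ℝ, Measurable f →
      ∫ ω, f (W ω) ∂P = ∫ x, f x ∂(gaussianReal μₑ ⟨σₑ ^ 2, sq_nonneg σₑ⟩) := by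
    intro f hfm
    rw [← hWlaw]
    exact (integral_map hW.aemeasurable hfm.aestronglyMeasurable).symm
  -- epsilon facts on P
  have Iε : Integrable ε P := by
    have h := eps_int1 hσ₁
    rw [← hεlaw] at h
    exact (integrable_map_measure measurable_id.aestronglyMeasurable hε.aemeasurable).mp h
  have Iε2 : Integrable (fun ω => ε ω ^ 2) P := by
    have h := eps_int2 hσ₁
    rw [← hεlaw] at h
    exact (integrable_map_measure (measurable_id.pow_const 2).aestronglyMeasurable
      hε.aemeasurable).mp h
  have Eε : ∫ ω, ε ω ∂P = 0 := by
    calc ∫ ω, ε ω ∂P = ∫ x, x ∂(gaussianReal 0 ⟨σ₁ ^ 2, sq_nonneg σ₁⟩) := by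
          rw [← hεlaw]
          exact (integral_map hε.aemeasurable measurable_id.aestronglyMeasurable).symm
      _ = 0 := eps_val1 hσ₁
  have Eε2 : ∫ ω, ε ω ^ 2 ∂P = σ₁ ^ 2 := by
    calc ∫ ω, ε ω ^ 2 ∂P = ∫ x, x ^ 2 ∂(gaussianReal 0 ⟨σ₁ ^ 2, sq_nonneg σ₁⟩) := by
          rw [← hεlaw]
          exact (integral_map hε.aemeasurable
            (measurable_id.pow_const 2).aestronglyMeasurable).symm
      _ = σ₁ ^ 2 := eps_val2 hσ₁
  -- independence of composed functions
  have indep2 : IndepFun (fun ω => f2 (W ω)) ε P := hindep.comp mf2 measurable_id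
  have indep3 : IndepFun (fun ω => f3 (W ω)) (fun ω => ε ω ^ 2) P :=
    hindep.comp mf3 (measurable_id.pow_const 2)
  -- integrability of the three terms
  have hterm1 : Integrable (fun ω => a ^ 2 * f1 (W ω)) P :=
    (intW f1 mf1 hNint1).const_mul _
  have hterm2 : Integrable (fun ω => (2 * a) * (f2 (W ω) * ε ω)) P :=
    (indep2.integrable_mul (intW f2 mf2 hNint2) Iε).const_mul _
  have hterm3 : Integrable (fun ω => f3 (W ω) * ε ω ^ 2) P :=
    indep3.integrable_mul (intW f3 mf3 hNint3) Iε2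
  have hT12 : Integrable (fun ω => a ^ 2 * f1 (W ω) + (2 * a) * (f2 (W ω) * ε ω)) P :=
    hterm1.add hterm2
  -- split the integral
  have hpt : ∀ ω, (a * (W ω - μₑ) + ε ω) ^ 2 * (1 + Real.exp (-(W ω)))
      = a ^ 2 * f1 (W ω) + (2 * a) * (f2 (W ω) * ε ω) + f3 (W ω) * ε ω ^ 2 := by
    intro ω
    rw [hf1, hf2, hf3]
    ring
  calc ∫ ω, (a * (W ω - μₑ) + ε ω) ^ 2 * (1 + Real.exp (-(W ω))) ∂P
      = ∫ ω, (a ^ 2 * f1 (W ω) + (2 * a) * (f2 (W ω) * ε ω) + f3 (W ω) * ε ω ^ 2) ∂P :=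
        integral_congr_ae (Filter.Eventually.of_forall hpt)
    _ = (∫ ω, a ^ 2 * f1 (W ω) ∂P) + (∫ ω, (2 * a) * (f2 (W ω) * ε ω) ∂P)
          + ∫ ω, f3 (W ω) * ε ω ^ 2 ∂P := by
        rw [integral_add hT12 hterm3, integral_add hterm1 hterm2]
    _ = a ^ 2 * (∫ x, f1 x ∂(gaussianReal μₑ ⟨σₑ ^ 2, sq_nonneg σₑ⟩))
          + (2 * a) * ((∫ ω, f2 (W ω) ∂P) * (∫ ω, ε ω ∂P))
          + (∫ ω, f3 (W ω) ∂P) * (∫ ω, ε ω ^ 2 ∂P) := by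
        rw [integral_const_mul, integral_const_mul, valW f1 mf1,
          indep2.integral_fun_mul_eq_mul_integral ((mf2.comp hW).aestronglyMeasurable) hε.aestronglyMeasurable,
          indep3.integral_fun_mul_eq_mul_integral ((mf3.comp hW).aestronglyMeasurable)
            ((hε.pow_const 2).aestronglyMeasurable)]
    _ = a ^ 2 * σₑ ^ 2 + σ₁ ^ 2
        + (a ^ 2 * σₑ ^ 2 * (σₑ ^ 2 + 1) + σ₁ ^ 2) * Real.exp (-μₑ + σₑ ^ 2 / 2) := by
        rw [hVf1, Eε, valW f3 mf3, hVf3, Eε2]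
        ring
end

section
/- Let Y, T, ε, W be square-integrable real random variables on a probability space with Y = T + ε, Cov(ε, W) = 0, Var(Y) > 0 and Var(W) > 0. Then Cov(Y, W)^2 / (Var(Y) · Var(W)) ≤ Var(T) / Var(Y). -/
open MeasureTheory ProbabilityTheory

private lemma mul_integrable_aux {Ω : Type*} [MeasurableSpace Ω] (P : Measure Ω)
    {f g : Ω → ℝ} (hf : MemLp f 2 P) (hg : MemLp g 2 P) :
    Integrable (fun ω => f ω * g ω) P := by
  have h := L2.integrable_inner (𝕜 := ℝ) (hf.toLp f) (hg.toLp g)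
  apply h.congr
  filter_upwards [hf.coeFn_toLp, hg.coeFn_toLp] with ω h1 h2
  simp [h1, h2, mul_comm]

private lemma cauchy_schwarz_aux {Ω : Type*} [MeasurableSpace Ω] (P : Measure Ω)
    {f g : Ω → ℝ} (hf : MemLp f 2 P) (hg : MemLp g 2 P) :
    (∫ ω, f ω * g ω ∂P) ^ 2 ≤ (∫ ω, f ω ^ 2 ∂P) * ∫ ω, g ω ^ 2 ∂P := by
  set F := hf.toLp f
  set G := hg.toLp g
  have h1 : ∫ ω, f ω * g ω ∂P = (inner ℝ F G : ℝ) := by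
    rw [L2.inner_def]
    apply integral_congr_ae
    filter_upwards [hf.coeFn_toLp, hg.coeFn_toLp] with ω e1 e2
    simp [F, G, e1, e2, mul_comm]
  have h2 : ∫ ω, f ω ^ 2 ∂P = ‖F‖ ^ 2 := by
    rw [← real_inner_self_eq_norm_sq, L2.inner_def]
    apply integral_congr_ae
    filter_upwards [hf.coeFn_toLp] with ω e1
    simp [F, e1, sq]
  have h3 : ∫ ω, g ω ^ 2 ∂P = ‖G‖ ^ 2 := by
    rw [← real_inner_self_eq_norm_sq, L2.inner_def]
    apply integral_congr_ae
    filter_upwards [hg.coeFn_toLp] with ω e1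
    simp [G, e1, sq]
  rw [h1, h2, h3]
  calc (inner ℝ F G : ℝ) ^ 2 = |(inner ℝ F G : ℝ)| ^ 2 := (sq_abs _).symm
    _ ≤ (‖F‖ * ‖G‖) ^ 2 := by
        apply pow_le_pow_left₀ (abs_nonneg _) (abs_real_inner_le_norm F G)
    _ = ‖F‖ ^ 2 * ‖G‖ ^ 2 := by ring

/-- The squared correlation `ρ² = Cov(Y, W)²/(Var Y · Var W)` is bounded by the R-squared
statistic `Var T / Var Y` when `Y = T + ε` and `ε` is uncorrelated with `W`. -/
theorem squared_correlation_le_rsquared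
    {Ω : Type*} [MeasurableSpace Ω] (P : Measure Ω) [IsProbabilityMeasure P]
    (Y T ε W : Ω → ℝ)
    (hY : MemLp Y 2 P) (hT : MemLp T 2 P) (hε : MemLp ε 2 P) (hW : MemLp W 2 P)
    (hsum : ∀ ω, Y ω = T ω + ε ω)
    (hcov : ∫ ω, (ε ω - ∫ ω', ε ω' ∂P) * (W ω - ∫ ω', W ω' ∂P) ∂P = 0)
    (hVarY : 0 < ∫ ω, (Y ω - ∫ ω', Y ω' ∂P) ^ 2 ∂P)
    (hVarW : 0 < ∫ ω, (W ω - ∫ ω', W ω' ∂P) ^ 2 ∂P) :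
    (∫ ω, (Y ω - ∫ ω', Y ω' ∂P) * (W ω - ∫ ω', W ω' ∂P) ∂P) ^ 2
        / ((∫ ω, (Y ω - ∫ ω', Y ω' ∂P) ^ 2 ∂P) * ∫ ω, (W ω - ∫ ω', W ω' ∂P) ^ 2 ∂P)
      ≤ (∫ ω, (T ω - ∫ ω', T ω' ∂P) ^ 2 ∂P) / ∫ ω, (Y ω - ∫ ω', Y ω' ∂P) ^ 2 ∂P := by
  set μY := ∫ ω', Y ω' ∂P
  set μT := ∫ ω', T ω' ∂P
  set με := ∫ ω', ε ω' ∂P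
  set μW := ∫ ω', W ω' ∂P
  -- mean splits
  have hμ : μY = μT + με := by
    have : Y = fun ω => T ω + ε ω := funext hsum
    rw [show μY = ∫ ω', Y ω' ∂P from rfl, this,
      integral_add (hT.integrable one_le_two) (hε.integrable one_le_two)]
  -- centered functions are in L²
  have hYc : MemLp (fun ω => Y ω - μY) 2 P := hY.sub (memLp_const μY)
  have hTc : MemLp (fun ω => T ω - μT) 2 P := hT.sub (memLp_const μT)
  have hεc : MemLp (fun ω => ε ω - με) 2 P := hε.sub (memLp_const με)
  have hWc : MemLp (fun ω => W ω - μW) 2 P := hW.sub (memLp_const μW)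
  -- covariance splits
  have hsplit : ∫ ω, (Y ω - μY) * (W ω - μW) ∂P = ∫ ω, (T ω - μT) * (W ω - μW) ∂P := by
    have heq : ∀ ω, (Y ω - μY) * (W ω - μW)
        = (T ω - μT) * (W ω - μW) + (ε ω - με) * (W ω - μW) := by
      intro ω; rw [hsum ω, hμ]; ring
    rw [integral_congr_ae (Filter.Eventually.of_forall heq),
      integral_add (mul_integrable_aux P hTc hWc) (mul_integrable_aux P hεc hWc), hcov, add_zero]
  have hCS := cauchy_schwarz_aux P hTc hWc
  rw [hsplit]
  calc (∫ ω, (T ω - μT) * (W ω - μW) ∂P) ^ 2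
        / ((∫ ω, (Y ω - μY) ^ 2 ∂P) * ∫ ω, (W ω - μW) ^ 2 ∂P)
      ≤ ((∫ ω, (T ω - μT) ^ 2 ∂P) * ∫ ω, (W ω - μW) ^ 2 ∂P)
        / ((∫ ω, (Y ω - μY) ^ 2 ∂P) * ∫ ω, (W ω - μW) ^ 2 ∂P) := by
        gcongr
    _ = (∫ ω, (T ω - μT) ^ 2 ∂P) / ∫ ω, (Y ω - μY) ^ 2 ∂P := by
        rw [mul_div_mul_right _ _ (ne_of_gt hVarW)]
end
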